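/- Let p be a prime with p ≡ 13 or 17 (mod 20). Then for all integers n ≥ 0, 0 ≤ i ≤ p − 1, and 0 ≤ j ≤ (p−1)/2, one has ν_p(F_{p(pn+i)+j+1}) = ν_p(F_{pn + ((i − j + (p−3)/2) mod (p+1)/2) + 1}). -/

import Mathlib

open Nat Polynomial

instance f5 : Fact (Nat.Prime 5) := ⟨by norm_num⟩

lemma five_ns (p : ℕ) [Fact p.Prime] (h : p % 20 = 13 ∨ p % 20 = 17) :
    ¬ IsSquare (5 : ZMod p) := by
  have hp2 : p ≠ 2 := by omega
  have h5 : (p:ℤ) % ((5:ℕ):ℤ) = ((p % 5 : ℕ) : ℤ) := by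
    push_cast [Int.emod_emod_of_dvd]
    omega
  have key : legendreSym p 5 = -1 := by
    have h1 := legendreSym.quadratic_reciprocity_one_mod_four (p:=5) (q:=p) rfl hp2
    have h2 : legendreSym p ((5:ℕ):ℤ) = legendreSym p 5 := by norm_num
    rw [← h2, h1, legendreSym.mod 5 p, h5]
    rcases h with h | h
    · have : p % 5 = 3 := by omega
      rw [this]; decide
    · have : p % 5 = 2 := by omega
      rw [this]; decide
  have := (legendreSym.eq_neg_one_iff p (a := 5)).mp key
  simpa using this

def lucas : ℕ → ℕ
  | 0 => 2
  | 1 => 1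
  | n+2 => lucas n + lucas (n+1)

lemma lucas_add_two (n : ℕ) : lucas (n+2) = lucas n + lucas (n+1) := rfl

lemma fib_half_succ_dvd (p : ℕ) [hpF : Fact p.Prime] (h4 : p % 4 = 1)
    (h5 : ¬ IsSquare (5 : ZMod p)) : p ∣ Nat.fib ((p+1)/2) := by
  have hp := hpF.out
  have hodd : p % 2 = 1 := by
    rcases hp.eq_two_or_odd with h | h
    · subst h; simp at h4
    · exact h
  have hp5 : p ≠ 5 := by
    rintro rfl
    exact h5 ⟨0, by rw [mul_zero]; exact_mod_cast (ZMod.natCast_self 5)⟩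
  set f : (ZMod p)[X] := X^2 - C 5 with hf
  have hirr : Irreducible f := by
    apply X_pow_sub_C_irreducible_of_prime (Nat.prime_two)
    intro b hb
    exact h5 ⟨b, by rw [← hb]; ring⟩
  haveI : Fact (Irreducible f) := ⟨hirr⟩
  set K := AdjoinRoot f with hK
  set s : K := AdjoinRoot.root f with hs
  have hinj : Function.Injective (algebraMap (ZMod p) K) :=
    (algebraMap (ZMod p) K).injective
  haveI : CharP K p := charP_of_injective_algebraMap hinj p
  have hs2 : s ^ 2 = algebraMap (ZMod p) K 5 := by
    have := AdjoinRoot.eval₂_root f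
    simp only [hf, eval₂_sub, eval₂_pow, eval₂_X, eval₂_C, sub_eq_zero] at this
    rw [hs, this, AdjoinRoot.algebraMap_eq]
  have h52 : (algebraMap (ZMod p) K) 5 = 5 := map_ofNat _ 5
  have hsq : s^2 = 5 := by rw [hs2, h52]
  have hbin : ∀ n : ℕ, (2:K) * (1+s)^n = 2^n * ((lucas n : K) + (fib n : K) * s) := by
    intro n
    induction n using Nat.twoStepInduction with
    | zero => simp [lucas]
    | one => simp [lucas]
    | more n ih0 ih1 =>
      have hrec : (1+s)^(n+2) = 2*(1+s)^(n+1) + 4*(1+s)^n := by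
        linear_combination (1+s)^n * hsq
      push_cast [lucas_add_two, Nat.fib_add_two]
      linear_combination 2 * hrec + 2 * ih1 + 4 * ih0
  have h5ne : (5 : ZMod p) ≠ 0 := by
    have : ((5:ℕ) : ZMod p) ≠ 0 := by
      rw [Ne, ZMod.natCast_eq_zero_iff]
      intro hd
      exact hp5 ((Nat.prime_dvd_prime_iff_eq hp (by norm_num)).mp hd)
    simpa using this
  have heuler : (5 : ZMod p)^(p/2) = -1 := by
    have h1 : ((5:ZMod p)^(p/2))^2 = 1 := by
      rw [← pow_mul]
      have he : p/2*2 = p - 1 := by omega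
      rw [he]
      exact ZMod.pow_card_sub_one_eq_one h5ne
    have h2 : (((5:ZMod p)^(p/2)) - 1) * (((5:ZMod p)^(p/2)) + 1) = 0 := by
      linear_combination h1
    rcases mul_eq_zero.mp h2 with h3 | h3
    · exact absurd ((ZMod.euler_criterion p h5ne).mpr (by linear_combination h3)) h5
    · linear_combination h3
  have hsp : s^p = -s := by
    have hp2 : s^p = s^(2*(p/2)+1) := by congr 1; omega
    rw [hp2]
    calc s^(2*(p/2)+1) = (s^2)^(p/2) * s := by rw [← pow_mul, ← pow_succ]
    _ = (algebraMap (ZMod p) K ((5:ZMod p)^(p/2))) * s := by rw [hs2, map_pow]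
    _ = -s := by rw [heuler, map_neg, map_one, neg_one_mul]
  have hfr : (1+s)^p = 1 - s := by
    rw [add_pow_char, hsp, one_pow]
    ring
  have hu : (1+s)^(p+1) = -4 := by
    rw [pow_succ, hfr]
    linear_combination -hsq
  set m := (p+1)/2 with hm
  have h2m : m * 2 = p + 1 := by omega
  have hsqm : ((1+s)^m)^2 = -4 := by rw [← pow_mul, h2m, hu]
  have hli : ∀ a b : ZMod p, algebraMap (ZMod p) K a + algebraMap (ZMod p) K b * s = 0 →
      a = 0 ∧ b = 0 := by
    intro a b hab
    by_cases hb : b = 0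
    · refine ⟨?_, hb⟩
      rw [hb, map_zero, zero_mul, add_zero] at hab
      exact hinj (by rw [hab, map_zero])
    · exfalso
      have hbK : algebraMap (ZMod p) K b ≠ 0 := fun hc => hb (hinj (by rw [hc, map_zero]))
      have hsx : s = algebraMap (ZMod p) K (-(a/b)) := by
        rw [map_neg, map_div₀]
        rw [← neg_div, eq_div_iff hbK]
        linear_combination hab
      apply h5
      refine ⟨-(a/b), ?_⟩
      have : algebraMap (ZMod p) K ((-(a/b))*(-(a/b))) = algebraMap (ZMod p) K 5 := by
        rw [map_mul, ← hsx, ← hs2]; ring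
      exact (hinj this).symm
  set L : ZMod p := (lucas m : ZMod p) with hL
  set F : ZMod p := (fib m : ZMod p) with hF
  have hb2 : ((2:K)*(1+s)^m)^2 = (2^m*((lucas m : K) + (fib m : K)*s))^2 := by rw [hbin m]
  have hmain : algebraMap (ZMod p) K (16 + (2^m:ZMod p)^2*(L^2+5*F^2)) +
      algebraMap (ZMod p) K (2*(2^m:ZMod p)^2*L*F) * s = 0 := by
    simp only [map_add, map_mul, map_pow, map_ofNat, hL, hF, map_natCast]
    linear_combination -hb2 + 4*hsqm - ((2:K)^m)^2*(fib m:K)^2*hsq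
  obtain ⟨hA, hB⟩ := hli _ _ hmain
  have h2ne : (2 : ZMod p) ≠ 0 := by
    have : ((2:ℕ) : ZMod p) ≠ 0 := by
      rw [Ne, ZMod.natCast_eq_zero_iff]
      intro hd
      have := (Nat.prime_dvd_prime_iff_eq hp (by norm_num)).mp hd
      omega
    simpa using this
  have h2m0 : ((2:ZMod p)^m)^2 ≠ 0 := pow_ne_zero _ (pow_ne_zero _ h2ne)
  have hLF : L * F = 0 := by
    have h' : (2:ZMod p) * (2^m)^2 * (L*F) = 0 := by linear_combination hB
    rcases mul_eq_zero.mp h' with h'' | h''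
    · exact absurd h'' (mul_ne_zero h2ne h2m0)
    · exact h''
  by_cases hFz : F = 0
  · have : ((fib m : ℕ) : ZMod p) = 0 := hFz
    exact (ZMod.natCast_eq_zero_iff _ _).mp this
  · exfalso
    have hLz : L = 0 := by
      rcases mul_eq_zero.mp hLF with h'' | h''
      · exact h''
      · exact absurd h'' hFz
    rw [hLz] at hA
    -- hA : 16 + (2^m)^2*(0+5*F^2) = 0
    obtain ⟨c, hc⟩ := (ZMod.exists_sq_eq_neg_one_iff (p := p)).mpr (by omega)
    apply h5
    refine ⟨4*c/(2^m*F), ?_⟩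
    have hd : (2:ZMod p)^m*F ≠ 0 := mul_ne_zero (pow_ne_zero _ h2ne) hFz
    field_simp
    -- goal : 5 * (2^m*F)^2 = 4*c*(4*c) or similar
    linear_combination hA + 16*hc

lemma fibA (m k : ℕ) : (Nat.fib m : ℤ) ∣ (Nat.fib (k*m+1) : ℤ) - (Nat.fib (m+1) : ℤ)^k := by
  induction k with
  | zero => simp
  | succ k ih =>
    obtain ⟨u, hu⟩ := ih
    refine ⟨(fib (k*m) : ℤ) + u * (fib (m+1):ℤ), ?_⟩
    have hadd : (fib (k*m + m + 1) : ℤ) = (fib (k*m):ℤ) * fib m + (fib (k*m+1):ℤ) * fib (m+1) := by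
      exact_mod_cast Nat.fib_add (k*m) m
    have hidx : (k+1)*m + 1 = k*m + m + 1 := by ring
    rw [hidx]
    push_cast
    linear_combination hadd + (fib (m+1):ℤ) * hu

lemma fibB (m k : ℕ) : ((Nat.fib (m+1) : ℤ))^2 ∣
    (Nat.fib ((k+1)*(m+1)) : ℤ) - (k+1) * (Nat.fib (m+1):ℤ) * (Nat.fib (m+2) : ℤ)^k := by
  induction k with
  | zero => simp
  | succ k ih =>
    obtain ⟨t, ht⟩ := ih
    obtain ⟨u, hu⟩ := fibA (m+1) (k+1)
    have hidx2 : m+1+1 = m+2 := by omega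
    rw [hidx2] at hu
    refine ⟨t * ((fib (m+2):ℤ) - fib (m+1)) + u - (k+1) * (fib (m+2):ℤ)^k, ?_⟩
    have hadd : (fib ((k+1)*(m+1) + m + 1) : ℤ) =
        (fib ((k+1)*(m+1)):ℤ) * fib m + (fib ((k+1)*(m+1)+1):ℤ) * fib (m+1) := by
      exact_mod_cast Nat.fib_add ((k+1)*(m+1)) m
    have hidx : (k+2)*(m+1) = (k+1)*(m+1) + m + 1 := by ring
    have hfm : (fib m : ℤ) = (fib (m+2):ℤ) - fib (m+1) := by
      have h2 : fib (m+2) = fib m + fib (m+1) := Nat.fib_add_two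
      push_cast [h2]; ring
    rw [hidx]
    push_cast
    linear_combination hadd + (fib ((k+1)*(m+1)):ℤ) * hfm +
      ((fib (m+2):ℤ) - fib (m+1)) * ht + (fib (m+1):ℤ) * hu

lemma fibVal (p : ℕ) [hpF : Fact p.Prime] (m k : ℕ) (hm : 0 < m) (hpm : p ∣ Nat.fib m)
    (hpk : ¬ p ∣ k) : padicValNat p (Nat.fib (k*m)) = padicValNat p (Nat.fib m) := by
  have hp := hpF.out
  have hk : k ≠ 0 := by rintro rfl; exact hpk (dvd_zero p)
  obtain ⟨m', rfl⟩ : ∃ m', m = m' + 1 := ⟨m-1, by omega⟩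
  obtain ⟨k', rfl⟩ : ∃ k', k = k' + 1 := ⟨k-1, by omega⟩
  have hM0 : Nat.fib (m'+1) ≠ 0 := (Nat.fib_pos.mpr hm).ne'
  set M := Nat.fib (m'+1) with hM
  set G := Nat.fib (m'+2) with hG
  set e := padicValNat p M with he
  have he1 : 1 ≤ e := one_le_padicValNat_of_dvd hM0 hpm
  have hpe : p ^ e ∣ M := pow_padicValNat_dvd
  have hpe1 : ¬ p ^ (e+1) ∣ M := pow_succ_padicValNat_not_dvd hM0
  have hpG : ¬ p ∣ G := by
    intro hd
    have hco := Nat.fib_coprime_fib_succ (m'+1)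
    have h1 : p ∣ Nat.gcd M G := Nat.dvd_gcd hpm hd
    rw [Nat.Coprime] at hco
    rw [hco] at h1
    have := Nat.le_of_dvd one_pos h1
    have := hp.two_le
    omega
  obtain ⟨w, hw⟩ := fibB m' k'
  set N := Nat.fib ((k'+1)*(m'+1)) with hN
  have hN0 : N ≠ 0 := (Nat.fib_pos.mpr (by positivity)).ne'
  have hcast : (N : ℤ) = ((k'+1) * M * G^k' : ℕ) + (M:ℤ)^2 * w := by
    push_cast
    linear_combination hw
  have hc1 : p ^ e ∣ (k'+1) * M * G^k' := (hpe.mul_left (k'+1)).mul_right _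
  have hc2 : ¬ p ^ (e+1) ∣ (k'+1) * M * G^k' := by
    intro hd
    have hcop : Nat.Coprime (p^(e+1)) ((k'+1) * G^k') := by
      apply Nat.Coprime.pow_left
      rw [Nat.Prime.coprime_iff_not_dvd hp]
      intro hd'
      rcases (Nat.Prime.dvd_mul hp).mp hd' with h | h
      · exact hpk h
      · exact hpG (hp.dvd_of_dvd_pow h)
    have hd2 : p^(e+1) ∣ M * ((k'+1) * G^k') := by
      have : M * ((k'+1) * G^k') = (k'+1) * M * G^k' := by ring
      rw [this]; exact hd
    exact hpe1 (Nat.Coprime.dvd_of_dvd_mul_right hcop hd2)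
  have hMM : (p:ℤ) ^ (e+1) ∣ (M:ℤ)^2 := by
    have h1 : (p:ℤ)^e ∣ (M:ℤ) := Int.natCast_dvd_natCast.mpr hpe |>.trans dvd_rfl |> (by exact_mod_cast ·)
    have h2 : (p:ℤ) ∣ (M:ℤ) := Int.natCast_dvd_natCast.mpr hpm
    calc (p:ℤ)^(e+1) = (p:ℤ)^e * p := by ring
    _ ∣ (M:ℤ) * M := mul_dvd_mul h1 h2
    _ = (M:ℤ)^2 := by ring
  have h1 : p ^ e ∣ N := by
    rw [← Int.natCast_dvd_natCast]
    rw [hcast]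
    push_cast
    apply dvd_add
    · exact_mod_cast Int.natCast_dvd_natCast.mpr hc1
    · exact dvd_mul_of_dvd_left ((pow_dvd_pow (p:ℤ) (by omega : e ≤ e+1)).trans hMM) w
  have h2 : ¬ p ^ (e+1) ∣ N := by
    intro hd
    apply hc2
    rw [← Int.natCast_dvd_natCast]
    have : (((k'+1) * M * G^k' : ℕ) : ℤ) = (N:ℤ) - (M:ℤ)^2 * w := by rw [hcast]; ring
    rw [this]
    push_cast
    exact dvd_sub (by exact_mod_cast Int.natCast_dvd_natCast.mpr hd) (dvd_mul_of_dvd_left hMM w)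
  refine le_antisymm ?_ ?_
  · by_contra hcon
    push_neg at hcon
    exact h2 ((padicValNat_dvd_iff_le hN0).mpr (by omega))
  · exact (padicValNat_dvd_iff_le hN0).mp h1

theorem nup_fib_digit_shift_13_17 (p : ℕ) (hp : p.Prime)
    (h : p % 20 = 13 ∨ p % 20 = 17) (n i j : ℕ)
    (hi : i ≤ p - 1) (hj : j ≤ (p - 1) / 2) :
    padicValNat p (Nat.fib (p * (p * n + i) + j + 1)) =
      padicValNat p
        (Nat.fib (p * n +
          (((i : ℤ) - (j : ℤ) + (((p - 3) / 2 : ℕ) : ℤ)) %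
            ((((p + 1) / 2 : ℕ) : ℤ))).toNat + 1)) := by
  haveI hpF : Fact p.Prime := ⟨hp⟩
  have hp13 : 13 ≤ p := by rcases h with h | h <;> omega
  have hpodd : p % 2 = 1 := by omega
  have h4 : p % 4 = 1 := by omega
  have h5 := five_ns p h
  set q : ℕ := (p+1)/2 with hq
  have hq2 : 2*q = p+1 := by omega
  have hqpos : 0 < q := by omega
  have hqp : q < p := by omega
  have hdvdq : p ∣ Nat.fib q := fib_half_succ_dvd p h4 h5
  have hcast32 : (((p-3)/2 : ℕ) : ℤ) = (q:ℤ) - 2 := by omega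
  set r : ℕ := (((i : ℤ) - (j : ℤ) + (((p - 3) / 2 : ℕ) : ℤ)) % ((((p + 1) / 2 : ℕ) : ℤ))).toNat with hrdef
  have hQ : ((((p + 1) / 2 : ℕ)) : ℤ) = (q:ℤ) := by rw [hq]
  have hrnn : (0:ℤ) ≤ ((i : ℤ) - (j : ℤ) + (((p - 3) / 2 : ℕ) : ℤ)) % ((((p + 1) / 2 : ℕ) : ℤ)) :=
    Int.emod_nonneg _ (by omega)
  have hr : (r:ℤ) = ((i : ℤ) - (j : ℤ) + ((q:ℤ) - 2)) % (q:ℤ) := by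
    rw [hrdef, Int.toNat_of_nonneg hrnn, hcast32, hQ]
  have hrq : r < q := by
    have h1 : ((i : ℤ) - (j : ℤ) + ((q:ℤ) - 2)) % (q:ℤ) < (q:ℤ) := Int.emod_lt_of_pos _ (by omega)
    omega
  set k : ℕ := p * (p * n + i) + j + 1 with hk
  set k' : ℕ := p * n + r + 1 with hk'
  have hsumZ : (q:ℤ) ∣ (k:ℤ) + (k':ℤ) := by
    set x : ℤ := (i : ℤ) - (j : ℤ) + ((q:ℤ) - 2) with hx
    have hmod : (r:ℤ) = x - (q:ℤ) * (x / (q:ℤ)) := by rw [hr, Int.emod_def]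
    set t : ℤ := x / (q:ℤ) with ht
    have hpq : (p:ℤ) = 2*(q:ℤ) - 1 := by omega
    refine ⟨4*(q:ℤ)*n - 2*n + 2*i + 1 - t, ?_⟩
    push_cast [hk, hk']
    rw [hpq]
    linear_combination hmod
  have hsumN : q ∣ k + k' := by
    rw [← Int.natCast_dvd_natCast]
    push_cast
    exact hsumZ
  have hpk : ¬ p ∣ k := by
    intro hd
    have h1 : k = p*(p*n+i) + (j+1) := by rw [hk]; ring
    have h2 : p ∣ j + 1 := by
      have := (Nat.dvd_add_right (Dvd.intro (p*n+i) rfl)).mp (h1 ▸ hd)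
      exact this
    have := Nat.le_of_dvd (by omega) h2
    omega
  have hpk' : ¬ p ∣ k' := by
    intro hd
    have h1 : k' = p*n + (r+1) := by rw [hk']; ring
    have h2 : p ∣ r + 1 := by
      have := (Nat.dvd_add_right (Dvd.intro n rfl)).mp (h1 ▸ hd)
      exact this
    have := Nat.le_of_dvd (by omega) h2
    omega
  set g : ℕ := Nat.gcd k q with hg
  have hgg : Nat.gcd k' q = g := by
    apply Nat.dvd_antisymm
    · apply Nat.dvd_gcd
      · have h1 : Nat.gcd k' q ∣ k + k' := dvd_trans (Nat.gcd_dvd_right k' q) hsumN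
        have h2 := Nat.dvd_sub h1 (Nat.gcd_dvd_left k' q)
        have h3 : k + k' - k' = k := by omega
        rwa [h3] at h2
      · exact Nat.gcd_dvd_right k' q
    · apply Nat.dvd_gcd
      · have h1 : g ∣ k + k' := dvd_trans (Nat.gcd_dvd_right k q) hsumN
        have h2 := Nat.dvd_sub h1 (Nat.gcd_dvd_left k q)
        have h3 : k + k' - k = k' := by omega
        rwa [h3] at h2
      · exact Nat.gcd_dvd_right k q
  have hgpos : 0 < g := Nat.gcd_pos_of_pos_right _ hqpos
  have hgk : g ∣ k := Nat.gcd_dvd_left k q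
  have hgk' : g ∣ k' := hgg ▸ Nat.gcd_dvd_left k' q
  have hgoal : padicValNat p (Nat.fib k) = padicValNat p (Nat.fib k') := by
    by_cases hpg : p ∣ Nat.fib g
    · have e1 : padicValNat p (Nat.fib k) = padicValNat p (Nat.fib g) := by
        rw [← Nat.div_mul_cancel hgk]
        exact fibVal p g (k/g) hgpos hpg (fun hc => hpk (hc.trans (Nat.div_dvd_of_dvd hgk)))
      have e2 : padicValNat p (Nat.fib k') = padicValNat p (Nat.fib g) := by
        rw [← Nat.div_mul_cancel hgk']
        exact fibVal p g (k'/g) hgpos hpg (fun hc => hpk' (hc.trans (Nat.div_dvd_of_dvd hgk')))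
      rw [e1, e2]
    · have e1 : ¬ p ∣ Nat.fib k := by
        intro hd
        apply hpg
        have h1 : p ∣ Nat.gcd (Nat.fib k) (Nat.fib q) := Nat.dvd_gcd hd hdvdq
        rwa [← Nat.fib_gcd] at h1
      have e2 : ¬ p ∣ Nat.fib k' := by
        intro hd
        apply hpg
        have h1 : p ∣ Nat.gcd (Nat.fib k') (Nat.fib q) := Nat.dvd_gcd hd hdvdq
        rw [← Nat.fib_gcd, hgg] at h1
        exact h1
      rw [padicValNat.eq_zero_of_not_dvd e1, padicValNat.eq_zero_of_not_dvd e2]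
  exact hgoal
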